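/- Let F be a twisting cocycle for the Hopf algebra H and let (E,ρ) be an adjoint H-module algebra. Define φ: E → E by φ(a) := Σ ad(F₁)(a)·ρ(F₂) and φ⁻¹: E → E by φ⁻¹(a) := Σ ρ(F₁)·a·ρ(γ(F₂ζ)). Then: (i) φ(a) = Σ ρ(F̄₁)·a·ρ(γ(F̄₂)ϑ) for all a ∈ E; (ii) φ and φ⁻¹ are mutually inverse k-linear bijections of E; (iii) φ is an algebra isomorphism from E with the cotwist product to E with the original product, i.e. φ(a∗b) = φ(a)·φ(b) for all a,b ∈ E. -/

import Mathlib

open TensorProduct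

noncomputable section

set_option maxHeartbeats 1000000
set_option synthInstance.maxHeartbeats 400000


variable (k : Type*) [Field k] (H : Type*) [Ring H] [HopfAlgebra k H]

/-- The comultiplication of `H` as a linear map. -/
noncomputable def comulL : H →ₗ[k] H ⊗[k] H := Coalgebra.comul

/-- The counit of `H` as a linear map. -/
noncomputable def counitL : H →ₗ[k] k := Coalgebra.counit

/-- The antipode of `H`. -/
noncomputable def anti : H →ₗ[k] H := HopfAlgebra.antipode (R := k)

/-- `F` together with its inverse `Finv` is a twisting (Drinfeld) cocycle:
`F` is invertible, `(Δ⊗id)(F)·(F⊗1) = (id⊗Δ)(F)·(1⊗F)` and `(ε⊗id)(F) = 1 = (id⊗ε)(F)`. -/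
def IsCocycle (F Finv : H ⊗[k] H) : Prop :=
  F * Finv = 1 ∧ Finv * F = 1 ∧
  (TensorProduct.assoc k H H H) ((TensorProduct.map (comulL k H) LinearMap.id F) * (F ⊗ₜ 1))
    = (TensorProduct.map LinearMap.id (comulL k H) F) * ((1 : H) ⊗ₜ F) ∧
  (TensorProduct.lid k H) (TensorProduct.map (counitL k H) LinearMap.id F) = 1 ∧
  (TensorProduct.rid k H) (TensorProduct.map LinearMap.id (counitL k H) F) = 1

/-- `ϑ = Σ γ(F₁)F₂`. -/
noncomputable def theta (F : H ⊗[k] H) : H :=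
  LinearMap.mul' k H (TensorProduct.map (anti k H) LinearMap.id F)

/-- `ζ = Σ F̄₂ γ⁻¹(F̄₁)`, where `γinv` is the inverse of the antipode and `Finv = Σ F̄₁⊗F̄₂`. -/
noncomputable def zeta (γinv : H →ₗ[k] H) (Finv : H ⊗[k] H) : H :=
  LinearMap.mul' k H (TensorProduct.map LinearMap.id γinv ((TensorProduct.comm k H H) Finv))

/-- `R` (with inverse `Rinv`) is a triangular structure: `R` is invertible,
`R Δ(h) = Δᵒᵖ(h) R`, the two hexagon identities `(Δ⊗id)(R) = R₁₃R₂₃`,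
`(id⊗Δ)(R) = R₁₃R₁₂` hold, and `R₂₁ R = 1`. -/
def IsTriangular (R Rinv : H ⊗[k] H) : Prop :=
  R * Rinv = 1 ∧ Rinv * R = 1 ∧
  (∀ h : H, R * comulL k H h = (TensorProduct.comm k H H) (comulL k H h) * R) ∧
  (TensorProduct.assoc k H H H) (TensorProduct.map (comulL k H) LinearMap.id R)
    = (TensorProduct.map LinearMap.id (TensorProduct.mk k H H 1) R) * ((1 : H) ⊗ₜ R) ∧
  (TensorProduct.map LinearMap.id (comulL k H) R)
    = (TensorProduct.map LinearMap.id (TensorProduct.mk k H H 1) R) *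
      ((TensorProduct.assoc k H H H) (R ⊗ₜ (1 : H))) ∧
  ((TensorProduct.comm k H H) R) * R = 1

/-- `bcomp U V x y = (U x) ∘ₗ (V y)`, bilinearly in `x, y`. -/
noncomputable def bcomp {A B C : Type*} [AddCommMonoid A] [AddCommMonoid B] [AddCommMonoid C]
    [Module k A] [Module k B] [Module k C]
    (U : H →ₗ[k] B →ₗ[k] C) (V : H →ₗ[k] A →ₗ[k] B) : H →ₗ[k] H →ₗ[k] (A →ₗ[k] C) :=
  ((((LinearMap.llcomp k A B C) ∘ₗ U).flip) ∘ₗ V).flip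

/-- Given an action `α` of `H` on `M`, the induced action of `H ⊗ H` on `M ⊗ M`:
`pairAct α (x ⊗ y) (a ⊗ b) = (α x a) ⊗ (α y b)`. -/
noncomputable def pairAct {M : Type*} [AddCommMonoid M] [Module k M]
    (α : H →ₗ[k] M →ₗ[k] M) : H ⊗[k] H →ₗ[k] (M ⊗[k] M →ₗ[k] M ⊗[k] M) :=
  (TensorProduct.homTensorHomMap (RingHom.id k) M M M M) ∘ₗ (TensorProduct.map α α)

/-- `sandwich α β (x ⊗ y) a = α x * a * β y`. -/
noncomputable def sandwich {E : Type*} [Ring E] [Algebra k E]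
    (α β : H →ₗ[k] E) : H ⊗[k] H →ₗ[k] E →ₗ[k] E :=
  TensorProduct.lift (bcomp k H ((LinearMap.mul k E) ∘ₗ α) ((LinearMap.mul k E).flip ∘ₗ β))

/-- The adjoint action associated with `ρ : H →ₗ E`:
`adAct ρ h a = Σ ρ(h⁽¹⁾) a ρ(γ(h⁽²⁾))`. -/
noncomputable def adAct {E : Type*} [Ring E] [Algebra k E]
    (ρ : H →ₗ[k] E) : H →ₗ[k] E →ₗ[k] E :=
  (sandwich k H ρ (ρ ∘ₗ anti k H)) ∘ₗ comulL k H

/-- The twisted comultiplication `Δ̃(h) = F⁻¹ Δ(h) F`. -/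
noncomputable def comulTw (F Finv : H ⊗[k] H) : H →ₗ[k] H ⊗[k] H :=
  (LinearMap.mulRight k F) ∘ₗ (LinearMap.mulLeft k Finv) ∘ₗ comulL k H

/-- The twisted antipode `γ̃(h) = ϑ⁻¹ γ(h) ϑ`. -/
noncomputable def antiTw (ϑ ϑinv : H) : H →ₗ[k] H :=
  (LinearMap.mulRight k ϑ) ∘ₗ (LinearMap.mulLeft k ϑinv) ∘ₗ anti k H

variable (A : Type*) [Ring A] [Algebra k A]

/-- `act` makes `A` a left `H`-module algebra:
`act` is a representation of `H`, `h•(ab) = Σ (h⁽¹⁾•a)(h⁽²⁾•b)` and `h•1 = ε(h)1`. -/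
def IsModAlg (act : H →ₗ[k] Module.End k A) : Prop :=
  act 1 = 1 ∧ (∀ g h : H, act (g * h) = act g * act h) ∧
  (∀ (h : H) (a b : A),
    act h (a * b) = LinearMap.mul' k A ((pairAct k H act) (comulL k H h) (a ⊗ₜ b))) ∧
  (∀ h : H, act h 1 = (counitL k H h) • (1 : A))

/-- The adjoint-type action of `H` on `End_k(A)`: `h.X = Σ ρ(h⁽¹⁾) ∘ X ∘ ρ(γ(h⁽²⁾))`. -/
noncomputable def dotAct (act : H →ₗ[k] Module.End k A) :
    H →ₗ[k] Module.End k A →ₗ[k] Module.End k A :=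
  (sandwich k H (E := Module.End k A) act (act ∘ₗ anti k H)) ∘ₗ comulL k H

lemma anti_one : anti k H 1 = 1 := by
  have h := HopfAlgebra.mul_antipode_rTensor_comul_apply (R := k) (A := H) 1
  simpa [Bialgebra.comul_one, Bialgebra.counit_one, Algebra.TensorProduct.one_def,
    LinearMap.rTensor_tmul, LinearMap.mul'_apply, anti] using h

lemma collapse_l (h : H) :
    LinearMap.mul' k H (TensorProduct.map (anti k H) LinearMap.id (comulL k H h))
      = counitL k H h • 1 := by
  have h2 := HopfAlgebra.mul_antipode_rTensor_comul_apply (R := k) (A := H) h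
  rw [Algebra.algebraMap_eq_smul_one] at h2
  exact h2

lemma collapse_r (h : H) :
    LinearMap.mul' k H (TensorProduct.map LinearMap.id (anti k H) (comulL k H h))
      = counitL k H h • 1 := by
  have h2 := HopfAlgebra.mul_antipode_lTensor_comul_apply (R := k) (A := H) h
  rw [Algebra.algebraMap_eq_smul_one] at h2
  exact h2

lemma counit_co_l (h : H) :
    (TensorProduct.lid k H) (TensorProduct.map (counitL k H) LinearMap.id (comulL k H h))
      = h := by
  have h2 := Coalgebra.rTensor_counit_comul (R := k) h
  have : (TensorProduct.map (counitL k H) LinearMap.id (comulL k H h))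
      = (1:k) ⊗ₜ[k] h := h2
  rw [this]; simp

lemma counit_co_r (h : H) :
    (TensorProduct.rid k H) (TensorProduct.map LinearMap.id (counitL k H) (comulL k H h))
      = h := by
  have h2 := Coalgebra.lTensor_counit_comul (R := k) h
  have : (TensorProduct.map LinearMap.id (counitL k H) (comulL k H h))
      = h ⊗ₜ[k] (1:k) := h2
  rw [this]; simp


/-- inner pairing `(y⊗z)⊗(y'⊗z') ↦ (y*y')*(γ z' * γ z)` -/
noncomputable def npair : (H ⊗[k] H) ⊗[k] (H ⊗[k] H) →ₗ[k] H :=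
  (LinearMap.mul' k H) ∘ₗ
    (TensorProduct.map (LinearMap.mul' k H)
      ((LinearMap.mul' k H) ∘ₗ (TensorProduct.map (anti k H) (anti k H)) ∘ₗ
        (TensorProduct.comm k H H).toLinearMap)) ∘ₗ
    (TensorProduct.tensorTensorTensorComm k H H H H).toLinearMap

/-- `B6 ((x⊗w)⊗(x'⊗w')) = γ(x*x') * npair (w ⊗ w')` -/
noncomputable def bsix : (H ⊗[k] (H ⊗[k] H)) ⊗[k] (H ⊗[k] (H ⊗[k] H)) →ₗ[k] H :=
  (LinearMap.mul' k H) ∘ₗ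
    (TensorProduct.map ((anti k H) ∘ₗ LinearMap.mul' k H) (npair k H)) ∘ₗ
    (TensorProduct.tensorTensorTensorComm k H (H ⊗[k] H) H (H ⊗[k] H)).toLinearMap

lemma npair_pure (y z y' z' : H) :
    npair k H ((y ⊗ₜ[k] z) ⊗ₜ[k] (y' ⊗ₜ[k] z'))
      = (y * y') * (anti k H z' * anti k H z) := by
  simp [npair, LinearMap.mul'_apply]

lemma ttt_mid (x x' : H) (w w' : H ⊗[k] H) :
    (TensorProduct.tensorTensorTensorComm k H (H ⊗[k] H) H (H ⊗[k] H))
        ((x ⊗ₜ[k] w) ⊗ₜ[k] (x' ⊗ₜ[k] w')) = (x ⊗ₜ[k] x') ⊗ₜ[k] (w ⊗ₜ[k] w') := by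
  induction w using TensorProduct.induction_on with
  | zero => simp
  | tmul s t =>
    induction w' using TensorProduct.induction_on with
    | zero => simp
    | tmul s' t' => simp
    | add u v hu hv => simp only [tmul_add, map_add, hu, hv]
  | add u v hu hv => simp only [tmul_add, add_tmul, map_add, hu, hv]

lemma bsix_pure (x x' : H) (w w' : H ⊗[k] H) :
    bsix k H ((x ⊗ₜ[k] w) ⊗ₜ[k] (x' ⊗ₜ[k] w'))
      = anti k H (x * x') * npair k H (w ⊗ₜ[k] w') := by
  simp [bsix, ttt_mid, LinearMap.mul'_apply]

lemma anti_mul (a b : H) : anti k H (a * b) = anti k H b * anti k H a := by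
  set γ := anti k H with hγdef
  set Δ := comulL k H with hΔdef
  set ε := counitL k H with hεdef
  set μ := LinearMap.mul' k H with hμdef
  have subY1 : ∀ (w' : H ⊗[k] H) (y z : H),
      npair k H ((y ⊗ₜ[k] z) ⊗ₜ[k] w')
        = y * (μ (TensorProduct.map LinearMap.id γ w')) * γ z := by
    intro w' y z
    induction w' using TensorProduct.induction_on with
    | zero => simp
    | tmul y' z' =>
      rw [npair_pure]
      simp only [TensorProduct.map_tmul, LinearMap.id_coe, id_eq, hμdef,
        LinearMap.mul'_apply, mul_assoc]
      rw [hγdef]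
    | add u v hu hv =>
      simp only [tmul_add, map_add, hu, hv, mul_add, add_mul]
  have subY2 : ∀ (w : H ⊗[k] H) (q' : H),
      npair k H (w ⊗ₜ[k] Δ q') = ε q' • (μ (TensorProduct.map LinearMap.id γ w)) := by
    intro w q'
    induction w using TensorProduct.induction_on with
    | zero => simp
    | tmul y z =>
      rw [subY1, collapse_r]
      simp only [TensorProduct.map_tmul, LinearMap.id_coe, id_eq, hμdef,
        LinearMap.mul'_apply, smul_mul_assoc, mul_smul_comm, mul_one]
      rw [hεdef]
    | add u v hu hv => simp only [add_tmul, map_add, hu, hv, smul_add]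
  have way1 : ∀ (u v : H ⊗[k] H),
      bsix k H ((LinearMap.lTensor H Δ u) ⊗ₜ[k] (LinearMap.lTensor H Δ v))
        = γ ((TensorProduct.rid k H) (LinearMap.lTensor H ε u)
            * (TensorProduct.rid k H) (LinearMap.lTensor H ε v)) := by
    intro u v
    induction u using TensorProduct.induction_on with
    | zero => simp
    | tmul p q =>
      induction v using TensorProduct.induction_on with
      | zero => simp
      | tmul p' q' =>
        rw [LinearMap.lTensor_tmul, LinearMap.lTensor_tmul, bsix_pure, subY2, collapse_r,
          LinearMap.lTensor_tmul, LinearMap.lTensor_tmul]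
        simp only [TensorProduct.rid_tmul, map_smul, smul_smul, smul_mul_assoc,
          mul_smul_comm, mul_one, smul_comm (ε q') (ε q)]
        rw [hγdef, hεdef, mul_comm (counitL k H q')]
      | add s t hs ht =>
        simp only [map_add, tmul_add, hs, ht, mul_add, smul_add, map_add]
    | add s t hs ht =>
      simp only [map_add, add_tmul, hs, ht, add_mul, smul_add, map_add]
  have subW2 : ∀ (w w' : H ⊗[k] H) (q q' : H),
      bsix k H (((TensorProduct.assoc k H H H) (w ⊗ₜ[k] q)) ⊗ₜ[k]
          ((TensorProduct.assoc k H H H) (w' ⊗ₜ[k] q')))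
        = μ (TensorProduct.map γ LinearMap.id (w * w')) * (γ q' * γ q) := by
    intro w w' q q'
    induction w using TensorProduct.induction_on with
    | zero => simp
    | tmul α β =>
      induction w' using TensorProduct.induction_on with
      | zero => simp
      | tmul α' β' =>
        rw [TensorProduct.assoc_tmul, TensorProduct.assoc_tmul, bsix_pure, npair_pure,
          Algebra.TensorProduct.tmul_mul_tmul]
        simp only [TensorProduct.map_tmul, LinearMap.id_coe, id_eq, hμdef,
          LinearMap.mul'_apply, mul_assoc]
        rw [hγdef]
      | add s t hs ht =>
        simp only [add_tmul, tmul_add, map_add, mul_add, add_mul, hs, ht]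
    | add s t hs ht =>
      simp only [add_tmul, tmul_add, map_add, mul_add, add_mul, hs, ht]
  have way2 : ∀ (u v : H ⊗[k] H),
      bsix k H (((TensorProduct.assoc k H H H) (LinearMap.rTensor H Δ u)) ⊗ₜ[k]
          ((TensorProduct.assoc k H H H) (LinearMap.rTensor H Δ v)))
        = γ ((TensorProduct.lid k H) (LinearMap.rTensor H ε v))
            * γ ((TensorProduct.lid k H) (LinearMap.rTensor H ε u)) := by
    intro u v
    induction u using TensorProduct.induction_on with
    | zero => simp
    | tmul p q =>
      induction v using TensorProduct.induction_on with
      | zero => simp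
      | tmul p' q' =>
        rw [LinearMap.rTensor_tmul, LinearMap.rTensor_tmul, subW2,
          show Δ p * Δ p' = Δ (p * p') from (Bialgebra.comul_mul p p').symm,
          collapse_l,
          show (counitL k H) (p * p') = counitL k H p * counitL k H p' from Bialgebra.counit_mul p p']
        simp only [LinearMap.rTensor_tmul, TensorProduct.lid_tmul, map_smul,
          smul_mul_assoc, mul_smul_comm, smul_smul, one_mul]
        rw [hεdef]
      | add s t hs ht =>
        simp only [map_add, tmul_add, add_tmul, hs, ht, mul_add, add_mul]
    | add s t hs ht =>
      simp only [map_add, tmul_add, add_tmul, hs, ht, mul_add, add_mul]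
  have hco : ∀ c : H, (TensorProduct.assoc k H H H) (LinearMap.rTensor H Δ (Δ c))
      = LinearMap.lTensor H Δ (Δ c) := fun c => Coalgebra.coassoc_apply c
  have hεl : ∀ c : H, (TensorProduct.lid k H) (LinearMap.rTensor H ε (Δ c)) = c := by
    intro c
    have h2 := Coalgebra.rTensor_counit_comul (R := k) c
    rw [show LinearMap.rTensor H ε (Δ c) = (1:k) ⊗ₜ[k] c from h2]; simp
  have hεr : ∀ c : H, (TensorProduct.rid k H) (LinearMap.lTensor H ε (Δ c)) = c := by
    intro c
    have h2 := Coalgebra.lTensor_counit_comul (R := k) c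
    rw [show LinearMap.lTensor H ε (Δ c) = c ⊗ₜ[k] (1:k) from h2]; simp
  have e1 := way1 (Δ a) (Δ b)
  rw [hεr, hεr] at e1
  have e2 := way2 (Δ a) (Δ b)
  rw [hco, hco, hεl, hεl] at e2
  rw [e1] at e2
  exact e2


-- Key collapse lemmas
lemma key1 : ∀ (u : H ⊗[k] H) (p q : H),
    LinearMap.mul' k H (TensorProduct.map (anti k H) LinearMap.id (u * (p ⊗ₜ[k] q)))
      = anti k H p * LinearMap.mul' k H (TensorProduct.map (anti k H) LinearMap.id u) * q := by
  intro u p q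
  induction u using TensorProduct.induction_on with
  | zero => simp
  | tmul x y =>
    rw [Algebra.TensorProduct.tmul_mul_tmul]
    simp only [TensorProduct.map_tmul, LinearMap.id_coe, id_eq, LinearMap.mul'_apply,
      anti_mul, mul_assoc]
  | add s t hs ht => simp only [add_mul, map_add, hs, ht, mul_add, add_mul]

lemma key1' (g p q : H) :
    LinearMap.mul' k H (TensorProduct.map (anti k H) LinearMap.id (comulL k H g * (p ⊗ₜ[k] q)))
      = counitL k H g • (anti k H p * q) := by
  rw [key1, collapse_l]
  simp only [smul_mul_assoc, mul_smul_comm, mul_one]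

lemma key2 : ∀ (u : H ⊗[k] H) (p q : H),
    LinearMap.mul' k H (TensorProduct.map LinearMap.id (anti k H) ((p ⊗ₜ[k] q) * u))
      = p * LinearMap.mul' k H (TensorProduct.map LinearMap.id (anti k H) u) * anti k H q := by
  intro u p q
  induction u using TensorProduct.induction_on with
  | zero => simp
  | tmul x y =>
    rw [Algebra.TensorProduct.tmul_mul_tmul]
    simp only [TensorProduct.map_tmul, LinearMap.id_coe, id_eq, LinearMap.mul'_apply,
      anti_mul, mul_assoc]
  | add s t hs ht => simp only [mul_add, map_add, hs, ht, mul_add, add_mul]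

lemma key2' (g p q : H) :
    LinearMap.mul' k H (TensorProduct.map LinearMap.id (anti k H) ((p ⊗ₜ[k] q) * comulL k H g))
      = counitL k H g • (p * anti k H q) := by
  rw [key2, collapse_r]
  simp only [smul_mul_assoc, mul_smul_comm, mul_one]

-- multiplicativity helpers
lemma mapΔid_mul : ∀ u v : H ⊗[k] H,
    TensorProduct.map (comulL k H) LinearMap.id (u * v)
      = TensorProduct.map (comulL k H) LinearMap.id u
        * TensorProduct.map (comulL k H) LinearMap.id v := by
  intro u v
  induction u using TensorProduct.induction_on with
  | zero => simp
  | tmul x y =>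
    induction v using TensorProduct.induction_on with
    | zero => simp
    | tmul p q =>
      simp only [Algebra.TensorProduct.tmul_mul_tmul, TensorProduct.map_tmul,
        LinearMap.id_coe, id_eq]
      rw [show comulL k H (x * p) = comulL k H x * comulL k H p from Bialgebra.comul_mul x p]
    | add s t hs ht => simp only [mul_add, map_add, hs, ht]
  | add s t hs ht => simp only [add_mul, map_add, hs, ht]

lemma mapidΔ_mul : ∀ u v : H ⊗[k] H,
    TensorProduct.map LinearMap.id (comulL k H) (u * v)
      = TensorProduct.map LinearMap.id (comulL k H) u
        * TensorProduct.map LinearMap.id (comulL k H) v := by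
  intro u v
  induction u using TensorProduct.induction_on with
  | zero => simp
  | tmul x y =>
    induction v using TensorProduct.induction_on with
    | zero => simp
    | tmul p q =>
      simp only [Algebra.TensorProduct.tmul_mul_tmul, TensorProduct.map_tmul,
        LinearMap.id_coe, id_eq]
      rw [show comulL k H (y * q) = comulL k H y * comulL k H q from Bialgebra.comul_mul y q]
    | add s t hs ht => simp only [mul_add, map_add, hs, ht]
  | add s t hs ht => simp only [add_mul, map_add, hs, ht]

lemma assoc_mulH (u v : (H ⊗[k] H) ⊗[k] H) :
    (TensorProduct.assoc k H H H) (u * v)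
      = (TensorProduct.assoc k H H H) u * (TensorProduct.assoc k H H H) v := by
  have h : ∀ x : (H ⊗[k] H) ⊗[k] H,
      (TensorProduct.assoc k H H H) x = Algebra.TensorProduct.assoc k k k H H H x := fun _ => rfl
  rw [h, h, h, map_mul]

lemma mapidΔ_one : TensorProduct.map LinearMap.id (comulL k H) (1 : H ⊗[k] H) = 1 := by
  rw [Algebra.TensorProduct.one_def]
  simp only [TensorProduct.map_tmul, LinearMap.id_coe, id_eq]
  rw [show comulL k H 1 = 1 from Bialgebra.comul_one]
  simp [Algebra.TensorProduct.one_def]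

lemma mapΔid_one : TensorProduct.map (comulL k H) LinearMap.id (1 : H ⊗[k] H) = 1 := by
  rw [Algebra.TensorProduct.one_def]
  simp only [TensorProduct.map_tmul, LinearMap.id_coe, id_eq]
  rw [show comulL k H 1 = 1 from Bialgebra.comul_one]
  simp [Algebra.TensorProduct.one_def]

lemma assoc_oneH : (TensorProduct.assoc k H H H) ((1 : H ⊗[k] H) ⊗ₜ[k] (1:H)) = 1 := by
  rw [show (1 : H ⊗[k] H) = (1:H) ⊗ₜ[k] (1:H) from Algebra.TensorProduct.one_def,
    TensorProduct.assoc_tmul,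
    show (1 : H ⊗[k] (H ⊗[k] H)) = (1:H) ⊗ₜ[k] (1:H⊗[k]H) from Algebra.TensorProduct.one_def,
    show (1 : H ⊗[k] H) = (1:H) ⊗ₜ[k] (1:H) from Algebra.TensorProduct.one_def]

lemma jay_mul (u v : H ⊗[k] H) :
    (TensorProduct.assoc k H H H) ((u * v) ⊗ₜ[k] (1:H))
      = (TensorProduct.assoc k H H H) (u ⊗ₜ[k] (1:H))
        * (TensorProduct.assoc k H H H) (v ⊗ₜ[k] (1:H)) := by
  rw [← assoc_mulH]
  congr 1
  rw [Algebra.TensorProduct.tmul_mul_tmul, mul_one]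

lemma i23_mul (u v : H ⊗[k] H) :
    ((1:H) ⊗ₜ[k] (u * v) : H ⊗[k] (H ⊗[k] H))
      = ((1:H) ⊗ₜ[k] u) * ((1:H) ⊗ₜ[k] v) := by
  rw [Algebra.TensorProduct.tmul_mul_tmul, mul_one]

-- collapsed-unit multiplicativity
lemma ridε_mul : ∀ u v : H ⊗[k] H,
    (TensorProduct.rid k H) (TensorProduct.map LinearMap.id (counitL k H) (u * v))
      = (TensorProduct.rid k H) (TensorProduct.map LinearMap.id (counitL k H) u)
        * (TensorProduct.rid k H) (TensorProduct.map LinearMap.id (counitL k H) v) := by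
  intro u v
  induction u using TensorProduct.induction_on with
  | zero => simp
  | tmul x y =>
    induction v using TensorProduct.induction_on with
    | zero => simp
    | tmul p q =>
      simp only [Algebra.TensorProduct.tmul_mul_tmul, TensorProduct.map_tmul,
        LinearMap.id_coe, id_eq, TensorProduct.rid_tmul,
        show counitL k H (y * q) = counitL k H y * counitL k H q from Bialgebra.counit_mul y q]
      rw [mul_smul, smul_mul_assoc, mul_smul_comm]
    | add s t hs ht => simp only [mul_add, map_add, hs, ht]
  | add s t hs ht => simp only [add_mul, map_add, hs, ht]

lemma lidε_mul : ∀ u v : H ⊗[k] H,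
    (TensorProduct.lid k H) (TensorProduct.map (counitL k H) LinearMap.id (u * v))
      = (TensorProduct.lid k H) (TensorProduct.map (counitL k H) LinearMap.id u)
        * (TensorProduct.lid k H) (TensorProduct.map (counitL k H) LinearMap.id v) := by
  intro u v
  induction u using TensorProduct.induction_on with
  | zero => simp
  | tmul x y =>
    induction v using TensorProduct.induction_on with
    | zero => simp
    | tmul p q =>
      simp only [Algebra.TensorProduct.tmul_mul_tmul, TensorProduct.map_tmul,
        LinearMap.id_coe, id_eq, TensorProduct.lid_tmul,
        show counitL k H (x * p) = counitL k H x * counitL k H p from Bialgebra.counit_mul x p]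
      rw [mul_smul, smul_mul_assoc, mul_smul_comm]
    | add s t hs ht => simp only [mul_add, map_add, hs, ht]
  | add s t hs ht => simp only [add_mul, map_add, hs, ht]

lemma ridε_one :
    (TensorProduct.rid k H) (TensorProduct.map LinearMap.id (counitL k H) (1 : H ⊗[k] H))
      = 1 := by
  rw [Algebra.TensorProduct.one_def]
  simp [show counitL k H (1:H) = 1 from Bialgebra.counit_one]

lemma lidε_one :
    (TensorProduct.lid k H) (TensorProduct.map (counitL k H) LinearMap.id (1 : H ⊗[k] H))
      = 1 := by
  rw [Algebra.TensorProduct.one_def]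
  simp [show counitL k H (1:H) = 1 from Bialgebra.counit_one]


-- ## Q-collapse lemmas
lemma qa : ∀ (Z Y : H ⊗[k] H),
    LinearMap.mul' k H (TensorProduct.map LinearMap.id
        (LinearMap.mul' k H ∘ₗ TensorProduct.map (anti k H) LinearMap.id)
        (((1:H) ⊗ₜ[k] Y) * ((TensorProduct.assoc k H H H) (Z ⊗ₜ[k] (1:H)))))
      = LinearMap.mul' k H (TensorProduct.map LinearMap.id (anti k H) Z) * theta k H Y := by
  intro Z Y
  induction Z using TensorProduct.induction_on with
  | zero => simp
  | tmul f g =>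
    rw [TensorProduct.assoc_tmul, Algebra.TensorProduct.tmul_mul_tmul, one_mul]
    simp only [TensorProduct.map_tmul, LinearMap.id_coe, id_eq, LinearMap.coe_comp,
      Function.comp_apply, LinearMap.mul'_apply]
    rw [key1]
    simp only [mul_one, theta, mul_assoc]
  | add s t hs ht =>
    simp only [add_tmul, map_add, mul_add, add_mul, hs, ht, tmul_add]
lemma qb : ∀ (X Y : H ⊗[k] H),
    LinearMap.mul' k H (TensorProduct.map LinearMap.id
        (LinearMap.mul' k H ∘ₗ TensorProduct.map (anti k H) LinearMap.id)
        ((TensorProduct.map LinearMap.id (comulL k H) X) *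
          ((TensorProduct.assoc k H H H) (TensorProduct.map (comulL k H) LinearMap.id Y))))
      = (TensorProduct.rid k H) (TensorProduct.map LinearMap.id (counitL k H) X)
        * (TensorProduct.lid k H) (TensorProduct.map (counitL k H) LinearMap.id Y) := by
  intro X Y
  induction X using TensorProduct.induction_on with
  | zero => simp
  | tmul p q =>
    induction Y using TensorProduct.induction_on with
    | zero => simp
    | tmul r s =>
      simp only [TensorProduct.map_tmul, LinearMap.id_coe, id_eq]
      have sub : ∀ u : H ⊗[k] H,
          LinearMap.mul' k H (TensorProduct.map LinearMap.id
            (LinearMap.mul' k H ∘ₗ TensorProduct.map (anti k H) LinearMap.id)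
            ((p ⊗ₜ[k] comulL k H q) * ((TensorProduct.assoc k H H H) (u ⊗ₜ[k] s))))
          = counitL k H q •
              (p * LinearMap.mul' k H (TensorProduct.map LinearMap.id (anti k H) u) * s) := by
        intro u
        induction u using TensorProduct.induction_on with
        | zero => simp
        | tmul α β =>
          rw [TensorProduct.assoc_tmul, Algebra.TensorProduct.tmul_mul_tmul]
          simp only [TensorProduct.map_tmul, LinearMap.id_coe, id_eq, LinearMap.coe_comp,
            Function.comp_apply, LinearMap.mul'_apply]
          rw [key1']
          simp only [TensorProduct.map_tmul, LinearMap.id_coe, id_eq, LinearMap.mul'_apply,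
            smul_mul_assoc, mul_smul_comm, mul_assoc]
        | add s' t' hs ht => simp only [add_tmul, map_add, mul_add, add_mul, hs, ht, smul_add]
      rw [sub (comulL k H r), collapse_r]
      simp only [TensorProduct.rid_tmul, TensorProduct.lid_tmul, smul_mul_assoc,
        mul_smul_comm, mul_one, smul_smul]
      rw [mul_comm (counitL k H q) (counitL k H r)]
    | add s' t' hs ht => simp only [tmul_add, map_add, mul_add, add_mul, hs, ht]
  | add s' t' hs ht => simp only [add_tmul, tmul_add, map_add, mul_add, add_mul, hs, ht]
lemma qa' : ∀ (Y Z : H ⊗[k] H),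
    LinearMap.mul' k H (TensorProduct.map (anti k H)
        (LinearMap.mul' k H ∘ₗ TensorProduct.map LinearMap.id (anti k H))
        (((TensorProduct.assoc k H H H) (Y ⊗ₜ[k] (1:H))) * ((1:H) ⊗ₜ[k] Z)))
      = theta k H Y * LinearMap.mul' k H (TensorProduct.map LinearMap.id (anti k H) Z) := by
  intro Y Z
  induction Y using TensorProduct.induction_on with
  | zero => simp [theta]
  | tmul f g =>
    rw [TensorProduct.assoc_tmul, Algebra.TensorProduct.tmul_mul_tmul, mul_one]
    simp only [TensorProduct.map_tmul, LinearMap.id_coe, id_eq, LinearMap.coe_comp,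
      Function.comp_apply, LinearMap.mul'_apply]
    rw [key2, anti_one, mul_one]
    simp only [theta, TensorProduct.map_tmul, LinearMap.id_coe, id_eq, LinearMap.mul'_apply,
      mul_assoc]
  | add s t hs ht =>
    simp only [theta, add_tmul, map_add, mul_add, add_mul, hs, ht]
lemma qb' : ∀ (X Y : H ⊗[k] H),
    LinearMap.mul' k H (TensorProduct.map (anti k H)
        (LinearMap.mul' k H ∘ₗ TensorProduct.map LinearMap.id (anti k H))
        (((TensorProduct.assoc k H H H) (TensorProduct.map (comulL k H) LinearMap.id X)) *
          (TensorProduct.map LinearMap.id (comulL k H) Y)))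
      = anti k H ((TensorProduct.rid k H) (TensorProduct.map LinearMap.id (counitL k H) Y))
        * anti k H ((TensorProduct.lid k H) (TensorProduct.map (counitL k H) LinearMap.id X)) := by
  intro X Y
  induction X using TensorProduct.induction_on with
  | zero => simp
  | tmul p q =>
    induction Y using TensorProduct.induction_on with
    | zero => simp
    | tmul r s =>
      simp only [TensorProduct.map_tmul, LinearMap.id_coe, id_eq]
      have sub : ∀ u : H ⊗[k] H,
          LinearMap.mul' k H (TensorProduct.map (anti k H)
            (LinearMap.mul' k H ∘ₗ TensorProduct.map LinearMap.id (anti k H))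
            (((TensorProduct.assoc k H H H) (u ⊗ₜ[k] q)) * (r ⊗ₜ[k] comulL k H s)))
          = counitL k H s •
              (anti k H r * LinearMap.mul' k H (TensorProduct.map (anti k H) LinearMap.id u)
                * anti k H q) := by
        intro u
        induction u using TensorProduct.induction_on with
        | zero => simp
        | tmul α β =>
          rw [TensorProduct.assoc_tmul, Algebra.TensorProduct.tmul_mul_tmul]
          simp only [TensorProduct.map_tmul, LinearMap.id_coe, id_eq, LinearMap.coe_comp,
            Function.comp_apply, LinearMap.mul'_apply]
          rw [key2', anti_mul]
          simp only [TensorProduct.map_tmul, LinearMap.id_coe, id_eq, LinearMap.mul'_apply,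
            smul_mul_assoc, mul_smul_comm, mul_assoc]
        | add s' t' hs ht => simp only [add_tmul, map_add, mul_add, add_mul, hs, ht, smul_add]
      rw [sub (comulL k H p), collapse_l]
      simp only [TensorProduct.rid_tmul, TensorProduct.lid_tmul, map_smul, smul_mul_assoc,
        mul_smul_comm, mul_one, smul_smul, one_mul]
      rw [mul_comm (counitL k H s) (counitL k H p)]
    | add s' t' hs ht => simp only [tmul_add, map_add, mul_add, add_mul, hs, ht]
  | add s' t' hs ht => simp only [add_tmul, tmul_add, map_add, mul_add, add_mul, hs, ht]


-- ## cocycle consequences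
section Cocycle
variable {k} {H} (F Finv : H ⊗[k] H) (hF : IsCocycle k H F Finv)
include hF

lemma cocycle_base :
    (TensorProduct.assoc k H H H) (TensorProduct.map (comulL k H) LinearMap.id F)
      * (TensorProduct.assoc k H H H) (F ⊗ₜ[k] (1:H))
    = (TensorProduct.map LinearMap.id (comulL k H) F) * ((1:H) ⊗ₜ[k] F) := by
  rw [← assoc_mulH]
  exact hF.2.2.1

lemma d1_inv :
    (TensorProduct.assoc k H H H) (TensorProduct.map (comulL k H) LinearMap.id F)
      * (TensorProduct.assoc k H H H) (TensorProduct.map (comulL k H) LinearMap.id Finv) = 1 := by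
  rw [← assoc_mulH, ← mapΔid_mul, hF.1, mapΔid_one,
    show (1 : (H⊗[k]H) ⊗[k] H) = (1:H⊗[k]H) ⊗ₜ[k] (1:H) from Algebra.TensorProduct.one_def,
    assoc_oneH]

lemma d1_inv' :
    (TensorProduct.assoc k H H H) (TensorProduct.map (comulL k H) LinearMap.id Finv)
      * (TensorProduct.assoc k H H H) (TensorProduct.map (comulL k H) LinearMap.id F) = 1 := by
  rw [← assoc_mulH, ← mapΔid_mul, hF.2.1, mapΔid_one,
    show (1 : (H⊗[k]H) ⊗[k] H) = (1:H⊗[k]H) ⊗ₜ[k] (1:H) from Algebra.TensorProduct.one_def,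
    assoc_oneH]

lemma d2_inv :
    (TensorProduct.map LinearMap.id (comulL k H) F)
      * (TensorProduct.map LinearMap.id (comulL k H) Finv) = 1 := by
  rw [← mapidΔ_mul, hF.1, mapidΔ_one]

lemma d2_inv' :
    (TensorProduct.map LinearMap.id (comulL k H) Finv)
      * (TensorProduct.map LinearMap.id (comulL k H) F) = 1 := by
  rw [← mapidΔ_mul, hF.2.1, mapidΔ_one]

lemma j_inv :
    (TensorProduct.assoc k H H H) (F ⊗ₜ[k] (1:H))
      * (TensorProduct.assoc k H H H) (Finv ⊗ₜ[k] (1:H)) = 1 := by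
  rw [← jay_mul, hF.1, assoc_oneH]

lemma i_inv : ((1:H) ⊗ₜ[k] F) * ((1:H) ⊗ₜ[k] Finv) = (1 : H ⊗[k] (H ⊗[k] H)) := by
  rw [← i23_mul, hF.1,
    show (1 : H ⊗[k] (H⊗[k]H)) = (1:H) ⊗ₜ[k] (1:H⊗[k]H) from Algebra.TensorProduct.one_def]

lemma co_gammaeq :
    (TensorProduct.assoc k H H H) (TensorProduct.map (comulL k H) LinearMap.id F)
      = (TensorProduct.map LinearMap.id (comulL k H) F) * ((1:H) ⊗ₜ[k] F)
        * (TensorProduct.assoc k H H H) (Finv ⊗ₜ[k] (1:H)) := by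
  have e0 := cocycle_base F Finv hF
  have := congrArg (fun t => t * (TensorProduct.assoc k H H H) (Finv ⊗ₜ[k] (1:H))) e0
  rw [mul_assoc _ _ ((TensorProduct.assoc k H H H) (Finv ⊗ₜ[k] (1:H))), j_inv F Finv hF,
    mul_one] at this
  exact this

lemma co_alpha :
    ((1:H) ⊗ₜ[k] F) * (TensorProduct.assoc k H H H) (Finv ⊗ₜ[k] (1:H))
      = (TensorProduct.map LinearMap.id (comulL k H) Finv)
        * (TensorProduct.assoc k H H H) (TensorProduct.map (comulL k H) LinearMap.id F) := by
  have e0 := cocycle_base F Finv hF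
  have h1 := congrArg (fun t => (TensorProduct.map LinearMap.id (comulL k H) Finv) * t) e0
  rw [← mul_assoc, ← mul_assoc, d2_inv' F Finv hF, one_mul] at h1
  -- h1 : D2' * D1 * JF = IF
  have h2 := congrArg (fun t => t * (TensorProduct.assoc k H H H) (Finv ⊗ₜ[k] (1:H))) h1
  rw [mul_assoc _ _ ((TensorProduct.assoc k H H H) (Finv ⊗ₜ[k] (1:H))), j_inv F Finv hF,
    mul_one] at h2
  exact h2.symm

lemma co_beta :
    (TensorProduct.assoc k H H H) (F ⊗ₜ[k] (1:H)) * ((1:H) ⊗ₜ[k] Finv)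
      = (TensorProduct.assoc k H H H) (TensorProduct.map (comulL k H) LinearMap.id Finv)
        * (TensorProduct.map LinearMap.id (comulL k H) F) := by
  have e0 := cocycle_base F Finv hF
  have h1 := congrArg (fun t =>
    (TensorProduct.assoc k H H H) (TensorProduct.map (comulL k H) LinearMap.id Finv) * t) e0
  rw [← mul_assoc, d1_inv' F Finv hF, one_mul] at h1
  -- h1 : JF = D1' * (D2 F * IF)
  have h2 := congrArg (fun t => t * ((1:H) ⊗ₜ[k] Finv)) h1
  rw [mul_assoc _ _ ((1:H) ⊗ₜ[k] Finv), mul_assoc _ _ ((1:H) ⊗ₜ[k] Finv),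
    i_inv F Finv hF, mul_one] at h2
  exact h2

lemma ridε_Finv :
    (TensorProduct.rid k H) (TensorProduct.map LinearMap.id (counitL k H) Finv) = 1 := by
  have h := ridε_mul (k := k) (H := H) Finv F
  rw [hF.2.1, ridε_one, hF.2.2.2.2, mul_one] at h
  exact h.symm

lemma lidε_Finv :
    (TensorProduct.lid k H) (TensorProduct.map (counitL k H) LinearMap.id Finv) = 1 := by
  have h := lidε_mul (k := k) (H := H) Finv F
  rw [hF.2.1, lidε_one, hF.2.2.2.1, mul_one] at h
  exact h.symm

/-- `W * ϑ = 1` where `W = Σ F̄₁ γ(F̄₂)`. -/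
lemma W_theta :
    LinearMap.mul' k H (TensorProduct.map LinearMap.id (anti k H) Finv) * theta k H F = 1 := by
  have h := qa k H Finv F
  rw [co_alpha F Finv hF] at h
  rw [← h, qb k H Finv F, ridε_Finv F Finv hF, hF.2.2.2.1, one_mul]

/-- `ϑ * W = 1`. -/
lemma theta_W :
    theta k H F * LinearMap.mul' k H (TensorProduct.map LinearMap.id (anti k H) Finv) = 1 := by
  have h := qa' k H F Finv
  rw [co_beta F Finv hF] at h
  rw [← h, qb' k H Finv F, hF.2.2.2.2, lidε_Finv F Finv hF, anti_one, one_mul]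

end Cocycle

lemma anti_zeta (γinv : H →ₗ[k] H) (hγ2 : ∀ h : H, anti k H (γinv h) = h) :
    ∀ X : H ⊗[k] H, anti k H (zeta k H γinv X)
      = LinearMap.mul' k H (TensorProduct.map LinearMap.id (anti k H) X) := by
  intro X
  induction X using TensorProduct.induction_on with
  | zero => simp [zeta]
  | tmul f g =>
    simp only [zeta, TensorProduct.comm_tmul, TensorProduct.map_tmul, LinearMap.id_coe,
      id_eq, LinearMap.mul'_apply, anti_mul, hγ2]
  | add s t hs ht =>
    simp only [zeta, map_add] at hs ht ⊢
    rw [hs, ht]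


-- new H-level lemmas needed
lemma mgy (g : H) : ∀ Y : H ⊗[k] H,
    LinearMap.mul' k H (TensorProduct.map (anti k H) LinearMap.id (comulL k H g * Y))
      = counitL k H g • theta k H Y := by
  intro Y
  induction Y using TensorProduct.induction_on with
  | zero => simp [theta]
  | tmul p q => rw [key1', theta]; simp
  | add s t hs ht => simp only [theta, mul_add, map_add, hs, ht, smul_add]

lemma tee1 : ∀ u : H ⊗[k] H,
    TensorProduct.map LinearMap.id
        (LinearMap.mul' k H ∘ₗ TensorProduct.map (anti k H) LinearMap.id)
        (LinearMap.lTensor H (comulL k H) u)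
      = TensorProduct.map LinearMap.id ((Algebra.linearMap k H) ∘ₗ (counitL k H)) u := by
  intro u
  induction u using TensorProduct.induction_on with
  | zero => simp
  | tmul x y =>
    rw [LinearMap.lTensor_tmul]
    simp only [TensorProduct.map_tmul, LinearMap.id_coe, id_eq, LinearMap.coe_comp,
      Function.comp_apply, collapse_l, Algebra.linearMap_apply, Algebra.algebraMap_eq_smul_one]
  | add s t hs ht => simp only [map_add, hs, ht]

-- ## E-level lemmas
section Elemmas
variable (E : Type*) [Ring E] [Algebra k E] (ρ : H →ₐ[k] E)

lemma sandwich_tmul (α β : H →ₗ[k] E) (x y : H) (a : E) :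
    sandwich k H α β (x ⊗ₜ[k] y) a = α x * a * β y := by
  simp [sandwich, bcomp, LinearMap.mul_apply', mul_assoc]

lemma philift_tmul (x y : H) (a : E) :
    TensorProduct.lift ((bcomp k H ((LinearMap.mul k E).flip ∘ₗ ρ.toLinearMap)
        (adAct k H ρ.toLinearMap)).flip) (x ⊗ₜ[k] y) a
      = adAct k H ρ.toLinearMap x a * ρ.toLinearMap y := by
  simp [bcomp]

lemma adAct_eq (h : H) (a : E) :
    adAct k H ρ.toLinearMap h a
      = sandwich k H ρ.toLinearMap (ρ.toLinearMap ∘ₗ anti k H) (comulL k H h) a := rfl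

lemma pairAct_tmul {M : Type*} [AddCommMonoid M] [Module k M]
    (α : H →ₗ[k] M →ₗ[k] M) (p q : H) (m n : M) :
    pairAct k H α (p ⊗ₜ[k] q) (m ⊗ₜ[k] n) = α p m ⊗ₜ[k] α q n := by
  simp [pairAct]

lemma rhoL_mul (x y : H) : ρ.toLinearMap (x * y) = ρ.toLinearMap x * ρ.toLinearMap y :=
  map_mul ρ x y
lemma rhoL_one : ρ.toLinearMap (1 : H) = 1 := map_one ρ

lemma s1 : ∀ (X : H ⊗[k] H) (a : E),
    TensorProduct.lift ((bcomp k H ((LinearMap.mul k E).flip ∘ₗ ρ.toLinearMap)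
        (adAct k H ρ.toLinearMap)).flip) X a
      = sandwich k H ρ.toLinearMap ρ.toLinearMap
          (TensorProduct.map LinearMap.id
            (LinearMap.mul' k H ∘ₗ TensorProduct.map (anti k H) LinearMap.id)
            ((TensorProduct.assoc k H H H)
              (TensorProduct.map (comulL k H) LinearMap.id X))) a := by
  intro X a
  induction X using TensorProduct.induction_on with
  | zero => simp
  | tmul x y =>
    rw [philift_tmul, adAct_eq]
    simp only [TensorProduct.map_tmul, LinearMap.id_coe, id_eq]
    have sub : ∀ u : H ⊗[k] H,
        sandwich k H ρ.toLinearMap (ρ.toLinearMap ∘ₗ anti k H) u a * ρ.toLinearMap y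
          = sandwich k H ρ.toLinearMap ρ.toLinearMap
              (TensorProduct.map LinearMap.id
                (LinearMap.mul' k H ∘ₗ TensorProduct.map (anti k H) LinearMap.id)
                ((TensorProduct.assoc k H H H) (u ⊗ₜ[k] y))) a := by
      intro u
      induction u using TensorProduct.induction_on with
      | zero => simp
      | tmul p q =>
        rw [TensorProduct.assoc_tmul, sandwich_tmul]
        simp only [TensorProduct.map_tmul, LinearMap.id_coe, id_eq, LinearMap.coe_comp,
          Function.comp_apply, LinearMap.mul'_apply]
        rw [sandwich_tmul, rhoL_mul, mul_assoc]
      | add s t hs ht =>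
        simp only [add_tmul, map_add, LinearMap.add_apply, hs, ht, add_mul]
    exact sub (comulL k H x)
  | add s t hs ht =>
    simp only [map_add, LinearMap.add_apply, hs, ht]

lemma s3 : ∀ (X Y Z : H ⊗[k] H) (a : E),
    sandwich k H ρ.toLinearMap ρ.toLinearMap
        (TensorProduct.map LinearMap.id
          (LinearMap.mul' k H ∘ₗ TensorProduct.map (anti k H) LinearMap.id)
          ((TensorProduct.map LinearMap.id (comulL k H) X) * ((1:H) ⊗ₜ[k] Y)
            * ((TensorProduct.assoc k H H H) (Z ⊗ₜ[k] (1:H))))) a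
      = sandwich k H ρ.toLinearMap
          (ρ.toLinearMap ∘ₗ (LinearMap.mulRight k (theta k H Y)) ∘ₗ (anti k H))
          ((((TensorProduct.rid k H) (TensorProduct.map LinearMap.id (counitL k H) X))
              ⊗ₜ[k] (1:H)) * Z) a := by
  intro X Y Z a
  induction X using TensorProduct.induction_on with
  | zero => simp
  | tmul f g =>
    simp only [TensorProduct.map_tmul, LinearMap.id_coe, id_eq, TensorProduct.rid_tmul]
    induction Z using TensorProduct.induction_on with
    | zero => simp
    | tmul fb gb =>
      rw [TensorProduct.assoc_tmul, Algebra.TensorProduct.tmul_mul_tmul, mul_one,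
        Algebra.TensorProduct.tmul_mul_tmul]
      simp only [TensorProduct.map_tmul, LinearMap.id_coe, id_eq, LinearMap.coe_comp,
        Function.comp_apply]
      rw [key1, mul_one, mgy, sandwich_tmul, Algebra.TensorProduct.tmul_mul_tmul, one_mul,
        smul_mul_assoc, ← TensorProduct.smul_tmul', map_smul, LinearMap.smul_apply, sandwich_tmul]
      simp only [LinearMap.coe_comp, Function.comp_apply, LinearMap.mulRight_apply,
        map_smul, mul_smul_comm, smul_mul_assoc]
    | add s t hs ht =>
      simp only [tmul_add, add_tmul, map_add, mul_add, add_mul, LinearMap.add_apply,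
        hs, ht]
  | add s t hs ht =>
    simp only [add_tmul, tmul_add, map_add, mul_add, add_mul, LinearMap.add_apply,
      smul_add, hs, ht]

lemma c1 (th ze : H) (hth : th * anti k H ze = 1) :
    ∀ (X Y : H ⊗[k] H) (a : E),
    sandwich k H ρ.toLinearMap (ρ.toLinearMap ∘ₗ anti k H ∘ₗ LinearMap.mulRight k ze) X
        (sandwich k H ρ.toLinearMap
          (ρ.toLinearMap ∘ₗ LinearMap.mulRight k th ∘ₗ anti k H) Y a)
      = sandwich k H ρ.toLinearMap (ρ.toLinearMap ∘ₗ anti k H) (X * Y) a := by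
  intro X Y a
  induction X using TensorProduct.induction_on with
  | zero => simp
  | tmul f g =>
    induction Y using TensorProduct.induction_on with
    | zero => simp
    | tmul fb gb =>
      rw [sandwich_tmul, sandwich_tmul, Algebra.TensorProduct.tmul_mul_tmul, sandwich_tmul]
      simp only [LinearMap.coe_comp, Function.comp_apply, LinearMap.mulRight_apply]
      simp only [anti_mul, rhoL_mul, mul_assoc]
      rw [← mul_assoc (ρ.toLinearMap th), ← rhoL_mul, hth, rhoL_one, one_mul]
    | add s t hs ht =>
      simp only [map_add, LinearMap.add_apply, mul_add, add_mul, hs, ht, tmul_add]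
  | add s t hs ht =>
    simp only [map_add, LinearMap.add_apply, mul_add, add_mul, hs, ht, add_tmul]

lemma c2 (th ze : H) :
    ∀ (X Y : H ⊗[k] H) (a : E),
    sandwich k H ρ.toLinearMap (ρ.toLinearMap ∘ₗ LinearMap.mulRight k th ∘ₗ anti k H) X
        (sandwich k H ρ.toLinearMap
          (ρ.toLinearMap ∘ₗ anti k H ∘ₗ LinearMap.mulRight k ze) Y a)
      = sandwich k H ρ.toLinearMap
          (ρ.toLinearMap ∘ₗ LinearMap.mulLeft k (anti k H ze)
            ∘ₗ LinearMap.mulRight k th ∘ₗ anti k H) (X * Y) a := by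
  intro X Y a
  induction X using TensorProduct.induction_on with
  | zero => simp
  | tmul fb gb =>
    induction Y using TensorProduct.induction_on with
    | zero => simp
    | tmul f g =>
      rw [sandwich_tmul, sandwich_tmul, Algebra.TensorProduct.tmul_mul_tmul, sandwich_tmul]
      simp only [LinearMap.coe_comp, Function.comp_apply, LinearMap.mulRight_apply,
        LinearMap.mulLeft_apply]
      simp only [anti_mul, rhoL_mul, mul_assoc]
    | add s t hs ht =>
      simp only [map_add, LinearMap.add_apply, mul_add, add_mul, hs, ht, tmul_add]
  | add s t hs ht =>
    simp only [map_add, LinearMap.add_apply, mul_add, add_mul, hs, ht, add_tmul]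

lemma sand_one_gamma (a : E) :
    sandwich k H ρ.toLinearMap (ρ.toLinearMap ∘ₗ anti k H) (1 : H ⊗[k] H) a = a := by
  rw [show (1 : H ⊗[k] H) = (1:H) ⊗ₜ[k] (1:H) from Algebra.TensorProduct.one_def,
    sandwich_tmul]
  simp only [LinearMap.coe_comp, Function.comp_apply, anti_one, rhoL_one, one_mul, mul_one]

lemma sand_one_c2 (th ze : H) (hzt : anti k H ze * th = 1) (a : E) :
    sandwich k H ρ.toLinearMap
        (ρ.toLinearMap ∘ₗ LinearMap.mulLeft k (anti k H ze)
          ∘ₗ LinearMap.mulRight k th ∘ₗ anti k H) (1 : H ⊗[k] H) a = a := by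
  rw [show (1 : H ⊗[k] H) = (1:H) ⊗ₜ[k] (1:H) from Algebra.TensorProduct.one_def,
    sandwich_tmul]
  simp only [LinearMap.coe_comp, Function.comp_apply, anti_one, LinearMap.mulRight_apply,
    LinearMap.mulLeft_apply, one_mul, hzt, rhoL_one, mul_one]

lemma tee2 : ∀ (u : H ⊗[k] H) (a : E),
    sandwich k H ρ.toLinearMap ρ.toLinearMap
        (TensorProduct.map LinearMap.id ((Algebra.linearMap k H) ∘ₗ (counitL k H)) u) a
      = ρ.toLinearMap
          ((TensorProduct.rid k H) (TensorProduct.map LinearMap.id (counitL k H) u)) * a := by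
  intro u a
  induction u using TensorProduct.induction_on with
  | zero => simp
  | tmul x y =>
    simp only [TensorProduct.map_tmul, LinearMap.id_coe, id_eq, LinearMap.coe_comp,
      Function.comp_apply, Algebra.linearMap_apply, Algebra.algebraMap_eq_smul_one,
      TensorProduct.rid_tmul]
    rw [sandwich_tmul]
    simp only [map_smul, rhoL_one, mul_smul_comm, mul_one, smul_mul_assoc,
      LinearMap.smul_apply]
  | add s t hs ht => simp only [map_add, LinearMap.add_apply, hs, ht, add_mul]

lemma l1 : ∀ (h : H) (a : E),
    TensorProduct.lift ((bcomp k H ((LinearMap.mul k E).flip ∘ₗ ρ.toLinearMap)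
        (adAct k H ρ.toLinearMap)).flip) (comulL k H h) a = ρ.toLinearMap h * a := by
  intro h a
  rw [s1]
  rw [show (TensorProduct.map (comulL k H) LinearMap.id (comulL k H h))
      = LinearMap.rTensor H (comulL k H) (comulL k H h) from rfl]
  rw [show (TensorProduct.assoc k H H H)
        (LinearMap.rTensor H (comulL k H) (comulL k H h))
      = LinearMap.lTensor H (comulL k H) (comulL k H h) from Coalgebra.coassoc_apply h]
  rw [tee1, tee2, counit_co_r]

lemma ssand : ∀ (u v : H ⊗[k] H) (a : E),
    sandwich k H ρ.toLinearMap (ρ.toLinearMap ∘ₗ anti k H) (u * v) a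
      = sandwich k H ρ.toLinearMap (ρ.toLinearMap ∘ₗ anti k H) u
          (sandwich k H ρ.toLinearMap (ρ.toLinearMap ∘ₗ anti k H) v a) := by
  intro u v a
  induction u using TensorProduct.induction_on with
  | zero => simp
  | tmul p q =>
    induction v using TensorProduct.induction_on with
    | zero => simp
    | tmul r s =>
      rw [Algebra.TensorProduct.tmul_mul_tmul, sandwich_tmul, sandwich_tmul, sandwich_tmul]
      simp only [LinearMap.coe_comp, Function.comp_apply, anti_mul, rhoL_mul, mul_assoc]
    | add s t hs ht =>
      simp only [map_add, LinearMap.add_apply, mul_add, add_mul, hs, ht, tmul_add]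
  | add s t hs ht =>
    simp only [map_add, LinearMap.add_apply, mul_add, add_mul, hs, ht, add_tmul]

lemma adcomp (x y : H) (a : E) :
    adAct k H ρ.toLinearMap (x * y) a
      = adAct k H ρ.toLinearMap x (adAct k H ρ.toLinearMap y a) := by
  rw [adAct_eq, show comulL k H (x * y) = comulL k H x * comulL k H y from
    Bialgebra.comul_mul x y, ssand, ← adAct_eq, ← adAct_eq]

lemma sc : ∀ (Y : H ⊗[k] H) (g : H) (b : E),
    TensorProduct.lift ((bcomp k H ((LinearMap.mul k E).flip ∘ₗ ρ.toLinearMap)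
        (adAct k H ρ.toLinearMap)).flip) (comulL k H g * Y) b
      = ρ.toLinearMap g * TensorProduct.lift ((bcomp k H
          ((LinearMap.mul k E).flip ∘ₗ ρ.toLinearMap)
          (adAct k H ρ.toLinearMap)).flip) Y b := by
  intro Y g b
  induction Y using TensorProduct.induction_on with
  | zero => simp
  | tmul f' g' =>
    have sub : ∀ u : H ⊗[k] H,
        TensorProduct.lift ((bcomp k H ((LinearMap.mul k E).flip ∘ₗ ρ.toLinearMap)
            (adAct k H ρ.toLinearMap)).flip) (u * (f' ⊗ₜ[k] g')) b
          = TensorProduct.lift ((bcomp k H ((LinearMap.mul k E).flip ∘ₗ ρ.toLinearMap)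
              (adAct k H ρ.toLinearMap)).flip) u (adAct k H ρ.toLinearMap f' b)
            * ρ.toLinearMap g' := by
      intro u
      induction u using TensorProduct.induction_on with
      | zero => simp
      | tmul α β =>
        rw [Algebra.TensorProduct.tmul_mul_tmul, philift_tmul, philift_tmul, adcomp,
          rhoL_mul, mul_assoc]
      | add s t hs ht =>
        simp only [map_add, LinearMap.add_apply, add_mul, hs, ht]
    rw [sub (comulL k H g), l1, philift_tmul, mul_assoc]
  | add s t hs ht =>
    simp only [map_add, LinearMap.add_apply, mul_add, add_mul, hs, ht]

lemma p1 : ∀ (X : H ⊗[k] H) (x y : E),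
    LinearMap.mul' k E (pairAct k H (adAct k H ρ.toLinearMap) X (x ⊗ₜ[k] y))
      = LinearMap.mul' k E (TensorProduct.map ((adAct k H ρ.toLinearMap).flip x)
          ((sandwich k H ρ.toLinearMap (ρ.toLinearMap ∘ₗ anti k H)).flip y)
          (LinearMap.lTensor H (comulL k H) X)) := by
  intro X x y
  induction X using TensorProduct.induction_on with
  | zero => simp
  | tmul p q =>
    rw [pairAct_tmul, LinearMap.lTensor_tmul]
    simp only [TensorProduct.map_tmul, LinearMap.flip_apply, LinearMap.mul'_apply]
    simp only [adAct_eq]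
  | add s t hs ht => simp only [map_add, LinearMap.add_apply, hs, ht]

lemma p2 : ∀ (u : H ⊗[k] H) (x y : E),
    LinearMap.mul' k E (TensorProduct.map ((adAct k H ρ.toLinearMap).flip x)
        ((sandwich k H ρ.toLinearMap (ρ.toLinearMap ∘ₗ anti k H)).flip y)
        ((TensorProduct.assoc k H H H) (LinearMap.rTensor H (comulL k H) u)))
      = sandwich k H ρ.toLinearMap (ρ.toLinearMap ∘ₗ anti k H) u (x * y) := by
  intro u x y
  induction u using TensorProduct.induction_on with
  | zero => simp
  | tmul p q =>
    rw [LinearMap.rTensor_tmul]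
    have sub : ∀ v : H ⊗[k] H,
        LinearMap.mul' k E (TensorProduct.map ((adAct k H ρ.toLinearMap).flip x)
            ((sandwich k H ρ.toLinearMap (ρ.toLinearMap ∘ₗ anti k H)).flip y)
            ((TensorProduct.assoc k H H H) (v ⊗ₜ[k] q)))
          = TensorProduct.lift ((bcomp k H ((LinearMap.mul k E).flip ∘ₗ ρ.toLinearMap)
              (adAct k H ρ.toLinearMap)).flip) v x
            * (y * ρ.toLinearMap (anti k H q)) := by
      intro v
      induction v using TensorProduct.induction_on with
      | zero => simp
      | tmul α β =>
        rw [TensorProduct.assoc_tmul]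
        simp only [TensorProduct.map_tmul, LinearMap.flip_apply, LinearMap.mul'_apply]
        rw [sandwich_tmul, philift_tmul]
        simp only [LinearMap.coe_comp, Function.comp_apply, mul_assoc]
      | add s t hs ht => simp only [map_add, LinearMap.add_apply, add_mul, hs, ht, add_tmul]
    rw [sub (comulL k H p), l1, sandwich_tmul]
    simp only [LinearMap.coe_comp, Function.comp_apply, mul_assoc]
  | add s t hs ht => simp only [map_add, LinearMap.add_apply, hs, ht]

lemma lprod (h : H) (x y : E) :
    adAct k H ρ.toLinearMap h (x * y)
      = LinearMap.mul' k E (pairAct k H (adAct k H ρ.toLinearMap)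
          (comulL k H h) (x ⊗ₜ[k] y)) := by
  rw [adAct_eq, ← p2, p1]
  rw [show (TensorProduct.assoc k H H H)
        (LinearMap.rTensor H (comulL k H) (comulL k H h))
      = LinearMap.lTensor H (comulL k H) (comulL k H h) from Coalgebra.coassoc_apply h]

lemma adstar : ∀ (Y : H ⊗[k] H) (x : H) (a b : E),
    adAct k H ρ.toLinearMap x
        (LinearMap.mul' k E (pairAct k H (adAct k H ρ.toLinearMap) Y (a ⊗ₜ[k] b)))
      = LinearMap.mul' k E (pairAct k H (adAct k H ρ.toLinearMap)
          (comulL k H x * Y) (a ⊗ₜ[k] b)) := by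
  intro Y x a b
  induction Y using TensorProduct.induction_on with
  | zero => simp
  | tmul p q =>
    rw [pairAct_tmul, LinearMap.mul'_apply, lprod]
    have u1 : ∀ u : H ⊗[k] H,
        LinearMap.mul' k E (pairAct k H (adAct k H ρ.toLinearMap) u
            ((adAct k H ρ.toLinearMap p a) ⊗ₜ[k] (adAct k H ρ.toLinearMap q b)))
          = LinearMap.mul' k E (pairAct k H (adAct k H ρ.toLinearMap)
              (u * (p ⊗ₜ[k] q)) (a ⊗ₜ[k] b)) := by
      intro u
      induction u using TensorProduct.induction_on with
      | zero => simp
      | tmul r s =>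
        rw [Algebra.TensorProduct.tmul_mul_tmul, pairAct_tmul, pairAct_tmul,
          LinearMap.mul'_apply, LinearMap.mul'_apply, adcomp, adcomp]
      | add s t hs ht =>
        simp only [map_add, LinearMap.add_apply, add_mul, hs, ht]
    exact u1 (comulL k H x)
  | add s t hs ht =>
    simp only [map_add, LinearMap.add_apply, mul_add, hs, ht]

lemma xiL : ∀ (X Y : H ⊗[k] H) (a b : E),
    TensorProduct.lift ((bcomp k H ((LinearMap.mul k E).flip ∘ₗ ρ.toLinearMap)
        (adAct k H ρ.toLinearMap)).flip) X a
      * TensorProduct.lift ((bcomp k H ((LinearMap.mul k E).flip ∘ₗ ρ.toLinearMap)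
          (adAct k H ρ.toLinearMap)).flip) Y b
    = LinearMap.mul' k E (TensorProduct.map ((adAct k H ρ.toLinearMap).flip a)
        ((TensorProduct.lift ((bcomp k H ((LinearMap.mul k E).flip ∘ₗ ρ.toLinearMap)
          (adAct k H ρ.toLinearMap)).flip)).flip b)
        ((TensorProduct.map LinearMap.id (comulL k H) X) * ((1:H) ⊗ₜ[k] Y))) := by
  intro X Y a b
  induction X using TensorProduct.induction_on with
  | zero => simp
  | tmul f g =>
    simp only [TensorProduct.map_tmul, LinearMap.id_coe, id_eq]
    rw [Algebra.TensorProduct.tmul_mul_tmul, mul_one]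
    simp only [TensorProduct.map_tmul, LinearMap.flip_apply, LinearMap.mul'_apply]
    rw [sc, philift_tmul, mul_assoc]
  | add s t hs ht =>
    simp only [map_add, LinearMap.add_apply, add_mul, add_tmul, hs, ht]

lemma r2 : ∀ (w : H ⊗[k] H) (yy : H) (a b : E),
    LinearMap.mul' k E (pairAct k H (adAct k H ρ.toLinearMap) w (a ⊗ₜ[k] b))
        * ρ.toLinearMap yy
      = LinearMap.mul' k E (TensorProduct.map ((adAct k H ρ.toLinearMap).flip a)
          ((TensorProduct.lift ((bcomp k H ((LinearMap.mul k E).flip ∘ₗ ρ.toLinearMap)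
            (adAct k H ρ.toLinearMap)).flip)).flip b)
          ((TensorProduct.assoc k H H H) (w ⊗ₜ[k] yy))) := by
  intro w yy a b
  induction w using TensorProduct.induction_on with
  | zero => simp
  | tmul p q =>
    rw [pairAct_tmul, TensorProduct.assoc_tmul, LinearMap.mul'_apply]
    simp only [TensorProduct.map_tmul, LinearMap.flip_apply, LinearMap.mul'_apply]
    rw [philift_tmul, mul_assoc]
  | add s t hs ht =>
    simp only [map_add, LinearMap.add_apply, add_mul, add_tmul, hs, ht]

lemma xiR : ∀ (X Y : H ⊗[k] H) (a b : E),
    TensorProduct.lift ((bcomp k H ((LinearMap.mul k E).flip ∘ₗ ρ.toLinearMap)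
        (adAct k H ρ.toLinearMap)).flip) X
        (LinearMap.mul' k E (pairAct k H (adAct k H ρ.toLinearMap) Y (a ⊗ₜ[k] b)))
      = LinearMap.mul' k E (TensorProduct.map ((adAct k H ρ.toLinearMap).flip a)
          ((TensorProduct.lift ((bcomp k H ((LinearMap.mul k E).flip ∘ₗ ρ.toLinearMap)
            (adAct k H ρ.toLinearMap)).flip)).flip b)
          ((TensorProduct.assoc k H H H)
            ((TensorProduct.map (comulL k H) LinearMap.id X) * (Y ⊗ₜ[k] (1:H))))) := by
  intro X Y a b
  induction X using TensorProduct.induction_on with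
  | zero => simp
  | tmul x y =>
    rw [philift_tmul, adstar]
    simp only [TensorProduct.map_tmul, LinearMap.id_coe, id_eq]
    rw [Algebra.TensorProduct.tmul_mul_tmul, mul_one, r2]
  | add s t hs ht =>
    simp only [map_add, LinearMap.add_apply, add_mul, add_tmul, hs, ht]

end Elemmas


/-- For a twisting cocycle `F` and an adjoint `H`-module algebra `(E, ρ)`,
`φ : a ↦ Σ ad(F₁)(a)·ρ(F₂)` and `φ⁻¹ : a ↦ Σ ρ(F₁) a ρ(γ(F₂ζ))` satisfy:
(i) `φ(a) = Σ ρ(F̄₁) a ρ(γ(F̄₂)ϑ)`; (ii) they are mutually inverse; (iii) `φ` is an algebra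
isomorphism from the cotwist `(E, ∗)` to `E`: `φ(a∗b) = φ(a)φ(b)`. -/
theorem cotwist_phi_isIso
    (F Finv : H ⊗[k] H) (hF : IsCocycle k H F Finv)
    (γinv : H →ₗ[k] H)
    (hγ1 : ∀ h : H, γinv (anti k H h) = h) (hγ2 : ∀ h : H, anti k H (γinv h) = h)
    (E : Type*) [Ring E] [Algebra k E] (ρ : H →ₐ[k] E)
    (φ φinv : E →ₗ[k] E)
    (hφ : φ = TensorProduct.lift
      ((bcomp k H ((LinearMap.mul k E).flip ∘ₗ ρ.toLinearMap) (adAct k H ρ.toLinearMap)).flip) F)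
    (hφinv : φinv = sandwich k H ρ.toLinearMap
      (ρ.toLinearMap ∘ₗ (anti k H) ∘ₗ (LinearMap.mulRight k (zeta k H γinv Finv))) F) :
    (∀ a : E, φ a = (sandwich k H ρ.toLinearMap
        (ρ.toLinearMap ∘ₗ (LinearMap.mulRight k (theta k H F)) ∘ₗ (anti k H)) Finv) a) ∧
    (∀ a : E, φ (φinv a) = a) ∧ (∀ a : E, φinv (φ a) = a) ∧
    (∀ a b : E, φ (LinearMap.mul' k E
        ((pairAct k H (adAct k H ρ.toLinearMap)) F (a ⊗ₜ b))) = φ a * φ b) := by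
  have hi : ∀ a : E, φ a = (sandwich k H ρ.toLinearMap
      (ρ.toLinearMap ∘ₗ (LinearMap.mulRight k (theta k H F)) ∘ₗ (anti k H)) Finv) a := by
    intro a
    rw [hφ, s1, co_gammaeq F Finv hF, s3, hF.2.2.2.2,
      show ((1:H) ⊗ₜ[k] (1:H) : H ⊗[k] H) = 1 from (Algebra.TensorProduct.one_def).symm,
      one_mul]
  have hW := anti_zeta (k := k) (H := H) γinv hγ2 Finv
  have hth : theta k H F * anti k H (zeta k H γinv Finv) = 1 := by
    rw [hW]; exact theta_W F Finv hF
  have hzt : anti k H (zeta k H γinv Finv) * theta k H F = 1 := by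
    rw [hW]; exact W_theta F Finv hF
  refine ⟨hi, ?_, ?_, ?_⟩
  · intro a
    rw [hφinv, hi, c2 k H E ρ (theta k H F) (zeta k H γinv Finv) Finv F a, hF.2.1]
    exact sand_one_c2 k H E ρ (theta k H F) (zeta k H γinv Finv) hzt a
  · intro a
    rw [hi, hφinv, c1 k H E ρ (theta k H F) (zeta k H γinv Finv) hth F Finv a, hF.1]
    exact sand_one_gamma k H E ρ a
  · intro a b
    rw [hφ, xiR, hF.2.2.1, ← xiL]

end
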